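/- Let R be an η-symmetric linear operator on ℝ^5 and suppose there exist real numbers λ1, λ3, λ4, λ5 and a basis X1, X2, X3, X4, X5 of ℝ^5 satisfying R X1 = λ1 X1, R X2 = λ1 X2 + X1, R X3 = λ3 X3, R X4 = λ4 X4 and R X5 = λ5 X5 (a Jordan structure of Segre type [2111] or a degeneracy thereof, with exactly four independent eigenvectors). Then there exists a semi-null pentad (l, m, x, y, z), a sign ε ∈ {1, -1}, and real numbers ρ1, ρ3, ρ4, ρ5 such that for all u, v: η(R u, v) = ρ1(η(l,u)η(m,v)+η(m,u)η(l,v)) + ε η(l,u)η(l,v) + ρ3 η(x,u)η(x,v) + ρ4 η(y,u)η(y,v) + ρ5 η(z,u)η(z,v). (Canonical form for Segre type [2111].) -/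

import Mathlib

/-- The 5-dimensional Minkowski bilinear form of signature (-,+,+,+,+). -/
def eta (u v : Fin 5 → ℝ) : ℝ :=
  -u 0 * v 0 + u 1 * v 1 + u 2 * v 2 + u 3 * v 3 + u 4 * v 4

/-- A semi-null pentad: η(l,m) = η(x,x) = η(y,y) = η(z,z) = 1 and all other
pairwise inner products among l, m, x, y, z vanish. -/
def SemiNullPentad (l m x y z : Fin 5 → ℝ) : Prop :=
  eta l m = 1 ∧ eta x x = 1 ∧ eta y y = 1 ∧ eta z z = 1 ∧
  eta l l = 0 ∧ eta m m = 0 ∧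
  eta l x = 0 ∧ eta l y = 0 ∧ eta l z = 0 ∧
  eta m x = 0 ∧ eta m y = 0 ∧ eta m z = 0 ∧
  eta x y = 0 ∧ eta x z = 0 ∧ eta y z = 0

lemma eta_comm (u v : Fin 5 → ℝ) : eta u v = eta v u := by simp [eta]; ring
lemma eta_add_left (u w v : Fin 5 → ℝ) : eta (u + w) v = eta u v + eta w v := by
  simp [eta]; ring
lemma eta_add_right (u v w : Fin 5 → ℝ) : eta u (v + w) = eta u v + eta u w := by
  simp [eta]; ring
lemma eta_sub_left (u w v : Fin 5 → ℝ) : eta (u - w) v = eta u v - eta w v := by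
  simp [eta]; ring
lemma eta_sub_right (u v w : Fin 5 → ℝ) : eta u (v - w) = eta u v - eta u w := by
  simp [eta]; ring
lemma eta_smul_left (c : ℝ) (u v : Fin 5 → ℝ) : eta (c • u) v = c * eta u v := by
  simp [eta]; ring
lemma eta_smul_right (c : ℝ) (u v : Fin 5 → ℝ) : eta u (c • v) = c * eta u v := by
  simp [eta]; ring
lemma eta_zero_left (v : Fin 5 → ℝ) : eta 0 v = 0 := by simp [eta]
lemma eta_zero_right (v : Fin 5 → ℝ) : eta v 0 = 0 := by simp [eta]

lemma eta_nondeg (v : Fin 5 → ℝ) (h : ∀ u, eta v u = 0) : v = 0 := by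
  funext i
  fin_cases i
  · have := h (Pi.single 0 1); simp [eta, Pi.single_apply] at this; simpa using this
  · have := h (Pi.single 1 1); simp [eta, Pi.single_apply] at this; simpa using this
  · have := h (Pi.single 2 1); simp [eta, Pi.single_apply] at this; simpa using this
  · have := h (Pi.single 3 1); simp [eta, Pi.single_apply] at this; simpa using this
  · have := h (Pi.single 4 1); simp [eta, Pi.single_apply] at this; simpa using this

set_option maxHeartbeats 1000000 in
lemma lorentz_core (a w : Fin 5 → ℝ) (ha : eta a a = 0) (haw : eta a w = 0)
    (hw : eta w w ≤ 0) : a = 0 ∨ ∃ t : ℝ, w = t • a := by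
  set a0 := a 0; set a1 := a 1; set a2 := a 2; set a3 := a 3; set a4 := a 4
  set w0 := w 0; set w1 := w 1; set w2 := w 2; set w3 := w 3; set w4 := w 4
  have Sa : a1^2 + a2^2 + a3^2 + a4^2 = a0^2 := by
    simp only [eta] at ha; linear_combination ha
  have D : a1*w1 + a2*w2 + a3*w3 + a4*w4 = a0*w0 := by
    simp only [eta] at haw; linear_combination haw
  have Sw : w1^2 + w2^2 + w3^2 + w4^2 ≤ w0^2 := by
    simp only [eta] at hw; nlinarith [hw]
  by_cases h0 : a0 = 0
  · left
    have e1 : a1 = 0 := by nlinarith [sq_nonneg a1, sq_nonneg a2, sq_nonneg a3, sq_nonneg a4]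
    have e2 : a2 = 0 := by nlinarith [sq_nonneg a1, sq_nonneg a2, sq_nonneg a3, sq_nonneg a4]
    have e3 : a3 = 0 := by nlinarith [sq_nonneg a1, sq_nonneg a2, sq_nonneg a3, sq_nonneg a4]
    have e4 : a4 = 0 := by nlinarith [sq_nonneg a1, sq_nonneg a2, sq_nonneg a3, sq_nonneg a4]
    funext i; fin_cases i <;> assumption
  · right
    have hsum : (a1*w2 - a2*w1)^2 + (a1*w3 - a3*w1)^2 + (a1*w4 - a4*w1)^2
        + (a2*w3 - a3*w2)^2 + (a2*w4 - a4*w2)^2 + (a3*w4 - a4*w3)^2 ≤ 0 := by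
      have hsq := sq_nonneg a0
      have key : (a1*w2 - a2*w1)^2 + (a1*w3 - a3*w1)^2 + (a1*w4 - a4*w1)^2
          + (a2*w3 - a3*w2)^2 + (a2*w4 - a4*w2)^2 + (a3*w4 - a4*w3)^2
          = a0^2*(w1^2+w2^2+w3^2+w4^2) - (a0*w0)^2 := by
        rw [← Sa, ← D]; ring
      rw [key]
      nlinarith [sq_nonneg a0, Sw]
    have q12 := sq_nonneg (a1*w2 - a2*w1)
    have q13 := sq_nonneg (a1*w3 - a3*w1)
    have q14 := sq_nonneg (a1*w4 - a4*w1)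
    have q23 := sq_nonneg (a2*w3 - a3*w2)
    have q24 := sq_nonneg (a2*w4 - a4*w2)
    have q34 := sq_nonneg (a3*w4 - a4*w3)
    have c12 : a1*w2 - a2*w1 = 0 := by
      have h : (a1*w2 - a2*w1)^2 = 0 := by linarith
      exact pow_eq_zero_iff two_ne_zero |>.mp h
    have c13 : a1*w3 - a3*w1 = 0 := by
      have h : (a1*w3 - a3*w1)^2 = 0 := by linarith
      exact pow_eq_zero_iff two_ne_zero |>.mp h
    have c14 : a1*w4 - a4*w1 = 0 := by
      have h : (a1*w4 - a4*w1)^2 = 0 := by linarith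
      exact pow_eq_zero_iff two_ne_zero |>.mp h
    have c23 : a2*w3 - a3*w2 = 0 := by
      have h : (a2*w3 - a3*w2)^2 = 0 := by linarith
      exact pow_eq_zero_iff two_ne_zero |>.mp h
    have c24 : a2*w4 - a4*w2 = 0 := by
      have h : (a2*w4 - a4*w2)^2 = 0 := by linarith
      exact pow_eq_zero_iff two_ne_zero |>.mp h
    have c34 : a3*w4 - a4*w3 = 0 := by
      have h : (a3*w4 - a4*w3)^2 = 0 := by linarith
      exact pow_eq_zero_iff two_ne_zero |>.mp h
    refine ⟨w0 / a0, ?_⟩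
    have k1 : a0^2 * w1 = a0 * w0 * a1 := by
      linear_combination a1 * D - w1 * Sa - a2 * c12 - a3 * c13 - a4 * c14
    have k2 : a0^2 * w2 = a0 * w0 * a2 := by
      linear_combination a2 * D - w2 * Sa + a1 * c12 - a3 * c23 - a4 * c24
    have k3 : a0^2 * w3 = a0 * w0 * a3 := by
      linear_combination a3 * D - w3 * Sa + a1 * c13 + a2 * c23 - a4 * c34
    have k4 : a0^2 * w4 = a0 * w0 * a4 := by
      linear_combination a4 * D - w4 * Sa + a1 * c14 + a2 * c24 + a3 * c34
    funext i
    show w i = w0 / a0 * a i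
    have key : ∀ (wi ai : ℝ), a0^2 * wi = a0 * w0 * ai → wi = w0 / a0 * ai := by
      intro wi ai h
      field_simp
      apply mul_left_cancel₀ h0
      linear_combination h
    fin_cases i
    · show w0 = w0 / a0 * a0; field_simp
    · exact key w1 a1 k1
    · exact key w2 a2 k2
    · exact key w3 a3 k3
    · exact key w4 a4 k4


set_option maxHeartbeats 2000000

theorem canonical_form_2111
    (R : (Fin 5 → ℝ) →ₗ[ℝ] (Fin 5 → ℝ))
    (hR : ∀ u v : Fin 5 → ℝ, eta (R u) v = eta u (R v))
    (lam1 lam3 lam4 lam5 : ℝ) (X1 X2 X3 X4 X5 : Fin 5 → ℝ)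
    (hbasis : LinearIndependent ℝ ![X1, X2, X3, X4, X5] ∧
      Submodule.span ℝ {X1, X2, X3, X4, X5} = (⊤ : Submodule ℝ (Fin 5 → ℝ)))
    (h1 : R X1 = lam1 • X1) (h2 : R X2 = lam1 • X2 + X1)
    (h3 : R X3 = lam3 • X3) (h4 : R X4 = lam4 • X4) (h5 : R X5 = lam5 • X5) :
    ∃ l m x y z : Fin 5 → ℝ, SemiNullPentad l m x y z ∧
      ∃ ε : ℝ, (ε = 1 ∨ ε = -1) ∧
        ∃ p1 p3 p4 p5 : ℝ, ∀ u v : Fin 5 → ℝ, eta (R u) v =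
          p1 * (eta l u * eta m v + eta m u * eta l v) +
          ε * (eta l u * eta l v) +
          p3 * (eta x u * eta x v) + p4 * (eta y u * eta y v) +
          p5 * (eta z u * eta z v) := by
  obtain ⟨hind, hspan⟩ := hbasis
  have hX1ne : X1 ≠ 0 := by
    have := hind.ne_zero 0; simpa using this
  have eigOrth : ∀ (v w : Fin 5 → ℝ) (μ ν : ℝ), R v = μ • v → R w = ν • w →
      (μ - ν) * eta v w = 0 := by
    intro v w μ ν hv hw
    have h := hR v w
    rw [hv, hw, eta_smul_left, eta_smul_right] at h
    linear_combination h
  have h11 : eta X1 X1 = 0 := by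
    have h := hR X1 X2
    rw [h1, h2, eta_smul_left, eta_add_right, eta_smul_right] at h
    linarith
  have eigA : ∀ (v : Fin 5 → ℝ) (μ : ℝ), R v = μ • v → eta X1 v = 0 := by
    intro v μ hv
    have e1 : (lam1 - μ) * eta X1 v = 0 := eigOrth X1 v lam1 μ h1 hv
    have e2 : (lam1 - μ) * eta X2 v + eta X1 v = 0 := by
      have h := hR X2 v
      rw [h2, hv, eta_add_left, eta_smul_left, eta_smul_right] at h
      linear_combination h
    by_cases hc : lam1 = μ
    · rw [hc] at e2; simpa using e2
    · exact (mul_eq_zero.mp e1).resolve_left (sub_ne_zero.mpr hc)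
  have eigB : ∀ (v : Fin 5 → ℝ) (μ : ℝ), R v = μ • v → (lam1 - μ) * eta X2 v = 0 := by
    intro v μ hv
    have e2 : (lam1 - μ) * eta X2 v + eta X1 v = 0 := by
      have h := hR X2 v
      rw [h2, hv, eta_add_left, eta_smul_left, eta_smul_right] at h
      linear_combination h
    have := eigA v μ hv
    linarith
  have h12ne : eta X1 X2 ≠ 0 := by
    intro h
    apply hX1ne
    apply eta_nondeg
    intro u
    have hu : u ∈ Submodule.span ℝ ({X1, X2, X3, X4, X5} : Set (Fin 5 → ℝ)) := by
      rw [hspan]; trivial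
    induction hu using Submodule.span_induction with
    | mem w hw =>
      simp only [Set.mem_insert_iff, Set.mem_singleton_iff] at hw
      rcases hw with rfl | rfl | rfl | rfl | rfl
      · exact h11
      · exact h
      · exact eigA _ lam3 h3
      · exact eigA _ lam4 h4
      · exact eigA _ lam5 h5
    | zero => exact eta_zero_right X1
    | add u v _ _ hu hv => rw [eta_add_right, hu, hv]; ring
    | smul c u _ hu => rw [eta_smul_right, hu]; ring
  have pos : ∀ (v : Fin 5 → ℝ) (μ : ℝ), R v = μ • v → (∀ t : ℝ, v ≠ t • X1) →
      0 < eta v v := by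
    intro v μ hv hnp
    by_contra hle
    push_neg at hle
    rcases lorentz_core X1 v h11 (eigA v μ hv) hle with h | ⟨t, ht⟩
    · exact hX1ne h
    · exact hnp t ht
  have dep : ∀ c1 c3 c4 c5 : ℝ, c1 • X1 + c3 • X3 + c4 • X4 + c5 • X5 = 0 →
      c3 = 0 ∧ c4 = 0 ∧ c5 = 0 := by
    intro c1 c3 c4 c5 h
    have hsum : ∑ i, (![c1, 0, c3, c4, c5]) i • (![X1, X2, X3, X4, X5]) i = 0 := by
      rw [Fin.sum_univ_five]
      simp only [Matrix.cons_val_zero, Matrix.cons_val_one, Matrix.head_cons,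
        Matrix.cons_val_two, Matrix.tail_cons, Matrix.cons_val_three, Matrix.cons_val_four]
      rw [zero_smul, add_zero]
      exact h
    have hz := Fintype.linearIndependent_iff.mp hind _ hsum
    exact ⟨by simpa using hz 2, by simpa using hz 3, by simpa using hz 4⟩
  -- Gram–Schmidt on the spacelike eigenvectors
  have hne3 : ∀ t : ℝ, X3 ≠ t • X1 := by
    intro t h
    refine one_ne_zero (dep (-t) 1 0 0 ?_).1
    calc (-t) • X1 + (1:ℝ) • X3 + (0:ℝ) • X4 + (0:ℝ) • X5
        = X3 - t • X1 := by module
      _ = 0 := by rw [h]; module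
  have hpos3 : 0 < eta X3 X3 := pos X3 lam3 h3 hne3
  obtain ⟨Y4, hY4⟩ : ∃ Y4, Y4 = X4 - (eta X3 X4 / eta X3 X3) • X3 := ⟨_, rfl⟩
  have hc43 : (eta X3 X4 / eta X3 X3) * lam3 = lam4 * (eta X3 X4 / eta X3 X3) := by
    rcases mul_eq_zero.mp (eigOrth X3 X4 lam3 lam4 h3 h4) with h | h
    · have h' : lam3 = lam4 := by linarith
      rw [h']; ring
    · rw [h]; simp
  have hY4eig : R Y4 = lam4 • Y4 := by
    rw [hY4, map_sub, map_smul, h3, h4, smul_sub, smul_smul, smul_smul, hc43]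
  have hY4X3 : eta X3 Y4 = 0 := by
    rw [hY4, eta_sub_right, eta_smul_right]
    field_simp
    ring
  have hne4 : ∀ t : ℝ, Y4 ≠ t • X1 := by
    intro t h
    refine one_ne_zero (dep (-t) (-(eta X3 X4 / eta X3 X3)) 1 0 ?_).2.1
    calc (-t) • X1 + (-(eta X3 X4 / eta X3 X3)) • X3 + (1:ℝ) • X4 + (0:ℝ) • X5
        = (X4 - (eta X3 X4 / eta X3 X3) • X3) - t • X1 := by module
      _ = Y4 - t • X1 := by rw [← hY4]
      _ = 0 := by rw [h]; module
  have hpos4 : 0 < eta Y4 Y4 := pos Y4 lam4 hY4eig hne4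
  obtain ⟨Y5, hY5⟩ : ∃ Y5, Y5 = X5 - (eta X3 X5 / eta X3 X3) • X3 -
      (eta Y4 X5 / eta Y4 Y4) • Y4 := ⟨_, rfl⟩
  have hc53 : (eta X3 X5 / eta X3 X3) * lam3 = lam5 * (eta X3 X5 / eta X3 X3) := by
    rcases mul_eq_zero.mp (eigOrth X3 X5 lam3 lam5 h3 h5) with h | h
    · have h' : lam3 = lam5 := by linarith
      rw [h']; ring
    · rw [h]; simp
  have hc54 : (eta Y4 X5 / eta Y4 Y4) * lam4 = lam5 * (eta Y4 X5 / eta Y4 Y4) := by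
    rcases mul_eq_zero.mp (eigOrth Y4 X5 lam4 lam5 hY4eig h5) with h | h
    · have h' : lam4 = lam5 := by linarith
      rw [h']; ring
    · rw [h]; simp
  have hY5eig : R Y5 = lam5 • Y5 := by
    rw [hY5, map_sub, map_sub, map_smul, map_smul, h3, h5, hY4eig,
      smul_sub, smul_sub, smul_smul, smul_smul, smul_smul, smul_smul, hc53, hc54]
  have hY5X3 : eta X3 Y5 = 0 := by
    rw [hY5, eta_sub_right, eta_sub_right, eta_smul_right, eta_smul_right, hY4X3]
    field_simp
    ring
  have hY5Y4 : eta Y4 Y5 = 0 := by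
    rw [hY5, eta_sub_right, eta_sub_right, eta_smul_right, eta_smul_right,
      eta_comm Y4 X3, hY4X3]
    field_simp
    ring
  have hne5 : ∀ t : ℝ, Y5 ≠ t • X1 := by
    intro t h
    refine one_ne_zero (dep (-t)
      ((eta Y4 X5 / eta Y4 Y4) * (eta X3 X4 / eta X3 X3) - eta X3 X5 / eta X3 X3)
      (-(eta Y4 X5 / eta Y4 Y4)) 1 ?_).2.2
    calc (-t) • X1 + ((eta Y4 X5 / eta Y4 Y4) * (eta X3 X4 / eta X3 X3) -
            eta X3 X5 / eta X3 X3) • X3 + (-(eta Y4 X5 / eta Y4 Y4)) • X4 + (1:ℝ) • X5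
        = (X5 - (eta X3 X5 / eta X3 X3) • X3 -
            (eta Y4 X5 / eta Y4 Y4) • (X4 - (eta X3 X4 / eta X3 X3) • X3)) - t • X1 := by
          module
      _ = Y5 - t • X1 := by rw [← hY4, ← hY5]
      _ = 0 := by rw [h]; module
  have hpos5 : 0 < eta Y5 Y5 := pos Y5 lam5 hY5eig hne5
  -- normalization
  obtain ⟨x, hx⟩ : ∃ x, x = (Real.sqrt (eta X3 X3))⁻¹ • X3 := ⟨_, rfl⟩
  obtain ⟨y, hy⟩ : ∃ y, y = (Real.sqrt (eta Y4 Y4))⁻¹ • Y4 := ⟨_, rfl⟩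
  obtain ⟨z, hz⟩ : ∃ z, z = (Real.sqrt (eta Y5 Y5))⁻¹ • Y5 := ⟨_, rfl⟩
  have hr3 : 0 < Real.sqrt (eta X3 X3) := Real.sqrt_pos.mpr hpos3
  have hr4 : 0 < Real.sqrt (eta Y4 Y4) := Real.sqrt_pos.mpr hpos4
  have hr5 : 0 < Real.sqrt (eta Y5 Y5) := Real.sqrt_pos.mpr hpos5
  have hr3sq : Real.sqrt (eta X3 X3) ^ 2 = eta X3 X3 := Real.sq_sqrt hpos3.le
  have hr4sq : Real.sqrt (eta Y4 Y4) ^ 2 = eta Y4 Y4 := Real.sq_sqrt hpos4.le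
  have hr5sq : Real.sqrt (eta Y5 Y5) ^ 2 = eta Y5 Y5 := Real.sq_sqrt hpos5.le
  have hxx : eta x x = 1 := by
    rw [hx, eta_smul_left, eta_smul_right]
    field_simp
    exact hr3sq.symm
  have hyy : eta y y = 1 := by
    rw [hy, eta_smul_left, eta_smul_right]
    field_simp
    exact hr4sq.symm
  have hzz : eta z z = 1 := by
    rw [hz, eta_smul_left, eta_smul_right]
    field_simp
    exact hr5sq.symm
  have hxy : eta x y = 0 := by
    rw [hx, hy, eta_smul_left, eta_smul_right, hY4X3]; ring
  have hxz : eta x z = 0 := by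
    rw [hx, hz, eta_smul_left, eta_smul_right, hY5X3]; ring
  have hyz : eta y z = 0 := by
    rw [hy, hz, eta_smul_left, eta_smul_right, hY5Y4]; ring
  have hRx : R x = lam3 • x := by rw [hx, map_smul, h3, smul_comm]
  have hRy : R y = lam4 • y := by rw [hy, map_smul, hY4eig, smul_comm]
  have hRz : R z = lam5 • z := by rw [hz, map_smul, hY5eig, smul_comm]
  have hX1x : eta X1 x = 0 := eigA x lam3 hRx
  have hX1y : eta X1 y = 0 := eigA y lam4 hRy
  have hX1z : eta X1 z = 0 := eigA z lam5 hRz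
  -- the chain vector, made orthogonal to x, y, z
  obtain ⟨m0, hm0⟩ : ∃ m0, m0 = X2 - (eta x X2) • x - (eta y X2) • y -
      (eta z X2) • z := ⟨_, rfl⟩
  have hxm0 : eta x m0 = 0 := by
    rw [hm0, eta_sub_right, eta_sub_right, eta_sub_right, eta_smul_right,
      eta_smul_right, eta_smul_right, hxx, hxy, hxz]
    ring
  have hym0 : eta y m0 = 0 := by
    rw [hm0, eta_sub_right, eta_sub_right, eta_sub_right, eta_smul_right,
      eta_smul_right, eta_smul_right, hyy, eta_comm y x, hxy, hyz]
    ring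
  have hzm0 : eta z m0 = 0 := by
    rw [hm0, eta_sub_right, eta_sub_right, eta_sub_right, eta_smul_right,
      eta_smul_right, eta_smul_right, hzz, eta_comm z x, hxz, eta_comm z y, hyz]
    ring
  have hcx : eta x X2 * lam3 = lam1 * eta x X2 := by
    have h := eigB x lam3 hRx
    rw [eta_comm X2 x] at h
    linear_combination -h
  have hcy : eta y X2 * lam4 = lam1 * eta y X2 := by
    have h := eigB y lam4 hRy
    rw [eta_comm X2 y] at h
    linear_combination -h
  have hcz : eta z X2 * lam5 = lam1 * eta z X2 := by
    have h := eigB z lam5 hRz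
    rw [eta_comm X2 z] at h
    linear_combination -h
  have hRm0 : R m0 = lam1 • m0 + X1 := by
    rw [hm0, map_sub, map_sub, map_sub, map_smul, map_smul, map_smul, h2,
      hRx, hRy, hRz, smul_smul, smul_smul, smul_smul, hcx, hcy, hcz]
    rw [smul_sub, smul_sub, smul_sub, smul_smul, smul_smul, smul_smul]
    module
  have hX1m0 : eta X1 m0 = eta X1 X2 := by
    rw [hm0, eta_sub_right, eta_sub_right, eta_sub_right, eta_smul_right,
      eta_smul_right, eta_smul_right, hX1x, hX1y, hX1z]
    ring
  -- make it null
  obtain ⟨m1, hm1⟩ : ∃ m1, m1 = m0 - (eta m0 m0 / (2 * eta X1 X2)) • X1 := ⟨_, rfl⟩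
  have hm1null : eta m1 m1 = 0 := by
    simp only [hm1, eta_sub_left, eta_sub_right, eta_smul_left, eta_smul_right,
      h11, hX1m0, eta_comm m0 X1]
    field_simp
    ring
  have hX1m1 : eta X1 m1 = eta X1 X2 := by
    rw [hm1, eta_sub_right, eta_smul_right, h11, hX1m0]
    ring
  have hxm1 : eta x m1 = 0 := by
    rw [hm1, eta_sub_right, eta_smul_right, eta_comm x X1, hX1x, hxm0]
    ring
  have hym1 : eta y m1 = 0 := by
    rw [hm1, eta_sub_right, eta_smul_right, eta_comm y X1, hX1y, hym0]
    ring
  have hzm1 : eta z m1 = 0 := by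
    rw [hm1, eta_sub_right, eta_smul_right, eta_comm z X1, hX1z, hzm0]
    ring
  have hRm1 : R m1 = lam1 • m1 + X1 := by
    rw [hm1, map_sub, map_smul, hRm0, h1, smul_sub, smul_smul, smul_smul, mul_comm]
    module
  -- the sign and scaling
  obtain ⟨ε, hε⟩ : ∃ ε : ℝ, ε = if 0 < eta X1 X2 then (1:ℝ) else -1 := ⟨_, rfl⟩
  have hεpm : ε = 1 ∨ ε = -1 := by
    rw [hε]; split <;> simp
  obtain ⟨a, ha⟩ : ∃ a, a = Real.sqrt |eta X1 X2| := ⟨_, rfl⟩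
  have hapos : 0 < a := by
    rw [ha]; exact Real.sqrt_pos.mpr (abs_pos.mpr h12ne)
  have hasq : a ^ 2 = ε * eta X1 X2 := by
    rw [ha, Real.sq_sqrt (abs_nonneg _), hε]
    split
    · rw [abs_of_pos (by assumption)]; ring
    · rw [abs_of_nonpos (by linarith [lt_of_le_of_ne (not_lt.mp (by assumption)) h12ne])]
      ring
  obtain ⟨l, hl⟩ : ∃ l, l = a⁻¹ • X1 := ⟨_, rfl⟩
  obtain ⟨m, hm⟩ : ∃ m, m = (a / eta X1 X2) • m1 := ⟨_, rfl⟩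
  have hRl : R l = lam1 • l := by rw [hl, map_smul, h1, smul_comm]
  have hεsq : ε * ε = 1 := by rcases hεpm with h | h <;> rw [h] <;> norm_num
  have hcoef : a / eta X1 X2 = ε * a⁻¹ := by
    rw [div_eq_iff h12ne]
    rw [mul_comm ε a⁻¹, mul_assoc]
    rw [← hasq]
    field_simp
  have hRm : R m = lam1 • m + ε • l := by
    rw [hm, map_smul, hRm1, smul_add, smul_smul, mul_comm, ← smul_smul, hl, smul_smul,
      hcoef, ← smul_smul]
    rw [smul_smul, smul_smul]
  -- Gram matrix of the pentad
  have hll : eta l l = 0 := by rw [hl, eta_smul_left, eta_smul_right, h11]; ring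
  have hmm : eta m m = 0 := by rw [hm, eta_smul_left, eta_smul_right, hm1null]; ring
  have hlm : eta l m = 1 := by
    rw [hl, hm, eta_smul_left, eta_smul_right, hX1m1]
    field_simp
  have hlx : eta l x = 0 := by rw [hl, eta_smul_left, hX1x]; ring
  have hly : eta l y = 0 := by rw [hl, eta_smul_left, hX1y]; ring
  have hlz : eta l z = 0 := by rw [hl, eta_smul_left, hX1z]; ring
  have hmx : eta m x = 0 := by
    rw [hm, eta_smul_left, eta_comm m1 x, hxm1]; ring
  have hmy : eta m y = 0 := by
    rw [hm, eta_smul_left, eta_comm m1 y, hym1]; ring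
  have hmz : eta m z = 0 := by
    rw [hm, eta_smul_left, eta_comm m1 z, hzm1]; ring
  -- commuted Gram facts
  have hml : eta m l = 1 := by rw [eta_comm]; exact hlm
  have hxl : eta x l = 0 := by rw [eta_comm]; exact hlx
  have hyl : eta y l = 0 := by rw [eta_comm]; exact hly
  have hzl : eta z l = 0 := by rw [eta_comm]; exact hlz
  have hxm : eta x m = 0 := by rw [eta_comm]; exact hmx
  have hym : eta y m = 0 := by rw [eta_comm]; exact hmy
  have hzm : eta z m = 0 := by rw [eta_comm]; exact hmz
  have hyx : eta y x = 0 := by rw [eta_comm]; exact hxy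
  have hzx : eta z x = 0 := by rw [eta_comm]; exact hxz
  have hzy : eta z y = 0 := by rw [eta_comm]; exact hyz
  -- the pentad is linearly independent, hence a basis
  have hlie : LinearIndependent ℝ ![l, m, x, y, z] := by
    rw [Fintype.linearIndependent_iff]
    intro gc hg
    rw [Fin.sum_univ_five] at hg
    simp only [Matrix.cons_val_zero, Matrix.cons_val_one, Matrix.head_cons,
      Matrix.cons_val_two, Matrix.tail_cons, Matrix.cons_val_three,
      Matrix.cons_val_four] at hg
    have e0 : gc 0 = 0 := by
      have h' := congrArg (fun w => eta w m) hg
      simpa [eta_add_left, eta_smul_left, eta_zero_left, hlm, hmm, hxm, hym, hzm]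
        using h'
    have e1 : gc 1 = 0 := by
      have h' := congrArg (fun w => eta w l) hg
      simpa [eta_add_left, eta_smul_left, eta_zero_left, hll, hml, hxl, hyl, hzl]
        using h'
    have e2 : gc 2 = 0 := by
      have h' := congrArg (fun w => eta w x) hg
      simpa [eta_add_left, eta_smul_left, eta_zero_left, hlx, hmx, hxx, hyx, hzx]
        using h'
    have e3 : gc 3 = 0 := by
      have h' := congrArg (fun w => eta w y) hg
      simpa [eta_add_left, eta_smul_left, eta_zero_left, hly, hmy, hxy, hyy, hzy]
        using h'
    have e4 : gc 4 = 0 := by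
      have h' := congrArg (fun w => eta w z) hg
      simpa [eta_add_left, eta_smul_left, eta_zero_left, hlz, hmz, hxz, hyz, hzz]
        using h'
    intro i
    fin_cases i <;> assumption
  have hcard : Fintype.card (Fin 5) = Module.finrank ℝ (Fin 5 → ℝ) := by simp
  have hbb := coe_basisOfLinearIndependentOfCardEqFinrank hlie hcard
  set b := basisOfLinearIndependentOfCardEqFinrank hlie hcard with hbdef
  -- the difference of the two bilinear forms, as a bilinear map
  set F : (Fin 5 → ℝ) →ₗ[ℝ] (Fin 5 → ℝ) →ₗ[ℝ] ℝ := LinearMap.mk₂ ℝ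
    (fun u v => eta (R u) v -
      (lam1 * (eta l u * eta m v + eta m u * eta l v) +
        ε * (eta l u * eta l v) +
        lam3 * (eta x u * eta x v) + lam4 * (eta y u * eta y v) +
        lam5 * (eta z u * eta z v)))
    (by intro u1 u2 v
        simp only [map_add, eta_add_left, eta_add_right]
        ring)
    (by intro c u v
        simp only [map_smul, eta_smul_left, eta_smul_right, smul_eq_mul]
        ring)
    (by intro u v1 v2
        simp only [eta_add_right]
        ring)
    (by intro c u v
        simp only [eta_smul_right, smul_eq_mul]
        ring) with hFdef
  have hF0 : F = (0 : (Fin 5 → ℝ) →ₗ[ℝ] (Fin 5 → ℝ) →ₗ[ℝ] ℝ) := by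
    apply b.ext
    intro i
    apply b.ext
    intro j
    rw [hbb]
    fin_cases i <;> fin_cases j <;>
      simp [hFdef, LinearMap.mk₂_apply,
        hRl, hRm, hRx, hRy, hRz, eta_add_left, eta_smul_left,
        hll, hlm, hml, hmm, hlx, hxl, hly, hyl, hlz, hzl, hmx, hxm, hmy, hym,
        hmz, hzm, hxy, hyx, hxz, hzx, hyz, hzy, hxx, hyy, hzz]
  refine ⟨l, m, x, y, z,
    ⟨hlm, hxx, hyy, hzz, hll, hmm, hlx, hly, hlz, hmx, hmy, hmz, hxy, hxz, hyz⟩,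
    ε, hεpm, lam1, lam3, lam4, lam5, ?_⟩
  intro u v
  have h' := LinearMap.congr_fun (LinearMap.congr_fun hF0 u) v
  simp only [hFdef, LinearMap.mk₂_apply, LinearMap.zero_apply] at h'
  linarith
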